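/- Let p, q, r ≥ 0 be real numbers and let α, β, γ be real numbers with α = β + γ. Then p + q + r ≥ −2√(qr)·cos α + 2√(pr)·cos β + 2√(pq)·cos γ. -/
import Mathlib


theorem statement1 (p q r α β γ : ℝ) (hp : 0 ≤ p) (hq : 0 ≤ q) (hr : 0 ≤ r)
    (h : α = β + γ) :
    p + q + r ≥ -(2 * Real.sqrt (q * r) * Real.cos α) + 2 * Real.sqrt (p * r) * Real.cos β +
      2 * Real.sqrt (p * q) * Real.cos γ := by
  subst h
  rw [Real.sqrt_mul hq, Real.sqrt_mul hp, Real.sqrt_mul hp, Real.cos_add]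
  have hsp := Real.sq_sqrt hp
  have hsq := Real.sq_sqrt hq
  have hsr := Real.sq_sqrt hr
  have h1 := Real.sin_sq_add_cos_sq β
  have h2 := Real.sin_sq_add_cos_sq γ
  nlinarith [sq_nonneg (Real.sqrt p - Real.sqrt q * Real.cos γ - Real.sqrt r * Real.cos β),
    sq_nonneg (Real.sqrt q * Real.sin γ - Real.sqrt r * Real.sin β),
    Real.sqrt_nonneg p, Real.sqrt_nonneg q, Real.sqrt_nonneg r]
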